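/- There exists an integral domain R that is an IDF domain but is neither a bounded factorization domain nor an MCD-finite domain. -/

import Mathlib

/-- The set of factorizations of `a`: multisets of atoms (irreducible elements), counted up
to associates, whose product is associated to `a`. -/
def FactorizationsOf {α : Type*} [CommMonoid α] (a : α) : Set (Multiset (Associates α)) :=
  {s | (∀ p ∈ s, Irreducible p) ∧ s.prod = Associates.mk a}

/-- `d` is a maximal common divisor (MCD) of a set `S` if `d` is a common divisor of `S`
and the only common divisors of `{s/d : s ∈ S}` are the units, i.e. whenever `d * e`
divides every element of `S`, `e` is a unit. -/
def IsMCD {α : Type*} [CommMonoid α] (S : Set α) (d : α) : Prop :=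
  (∀ s ∈ S, d ∣ s) ∧ ∀ e : α, (∀ s ∈ S, d * e ∣ s) → IsUnit e

/-- An integral domain is an IDF domain if every nonzero element is divisible by only
finitely many atoms up to associates. -/
def IsIDFDomain (R : Type*) [CommRing R] : Prop :=
  ∀ a : R, a ≠ 0 → {p : Associates R | Irreducible p ∧ p ∣ Associates.mk a}.Finite

/-- An integral domain is a bounded factorization domain (BFD) if every nonzero element has
a nonempty finite set of factorization lengths. -/
def IsBFD (R : Type*) [CommRing R] : Prop :=
  ∀ a : R, a ≠ 0 →
    (Multiset.card '' FactorizationsOf a).Nonempty ∧ (Multiset.card '' FactorizationsOf a).Finite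

/-- An integral domain is MCD-finite if every nonempty finite set of nonzero elements has
only finitely many maximal common divisors up to associates. -/
def IsMCDFiniteDomain (R : Type*) [CommRing R] : Prop :=
  ∀ S : Finset R, S.Nonempty → (∀ s ∈ S, s ≠ (0 : R)) →
    (Associates.mk '' {d : R | IsMCD (↑S : Set R) d}).Finite

noncomputable section

abbrev VV : Type := Fin 4 → ℚ

def Mc : AddSubmonoid VV where
  carrier := {v | 0 ≤ v 0 ∧ 0 ≤ v 1 ∧ 0 ≤ v 2 ∧ 0 ≤ v 3 ∧ v 3 ≤ v 0 + v 1 + v 2}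
  zero_mem' := by norm_num
  add_mem' := by
    rintro a b ⟨a0, a1, a2, a3, a4⟩ ⟨b0, b1, b2, b3, b4⟩
    refine ⟨?_, ?_, ?_, ?_, ?_⟩ <;> simp only [Pi.add_apply] <;> linarith

lemma mem_Mc {v : VV} : v ∈ Mc ↔ (0 ≤ v 0 ∧ 0 ≤ v 1 ∧ 0 ≤ v 2 ∧ 0 ≤ v 3 ∧ v 3 ≤ v 0 + v 1 + v 2) :=
  Iff.rfl

abbrev Mm : Type := ↥Mc

abbrev RR : Type := AddMonoidAlgebra (ZMod 2) Mm

instance : UniqueSums Mm :=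
  UniqueSums.of_injective_addHom (Mc.subtype.toAddHom) Subtype.coe_injective inferInstance

abbrev WW : Type := ℚ ×ₗ (ℚ ×ₗ (ℚ ×ₗ ℚ))

example : IsOrderedCancelAddMonoid WW := inferInstance

/-- the lex-embedding of the exponent monoid -/
def LL : Mm → WW := fun m =>
  toLex ((m : VV) 0, toLex ((m : VV) 1, toLex ((m : VV) 2, (m : VV) 3)))

lemma LL_inj : Function.Injective LL := by
  intro a b h
  unfold LL at h
  apply Subtype.coe_injective
  funext i
  have h0 := congrArg (fun p => (ofLex p).1 : WW → ℚ) h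
  have h1 := congrArg (fun p => (ofLex (ofLex p).2).1 : WW → ℚ) h
  have h2 := congrArg (fun p => (ofLex (ofLex (ofLex p).2).2).1 : WW → ℚ) h
  have h3 := congrArg (fun p => (ofLex (ofLex (ofLex p).2).2).2 : WW → ℚ) h
  fin_cases i <;> assumption

lemma LL_add (a b : Mm) : LL (a + b) = LL a + LL b := rfl

lemma add_cancel_Mm {a b c : Mm} (h : a + b = a + c) : b = c := by
  apply Subtype.coe_injective
  have : (a : VV) + b = (a : VV) + c := congrArg Subtype.val h
  exact add_left_cancel this

/-- coefficient of a product at an "extreme" pair of exponents -/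
lemma coeff_extreme (f g : RR) (mf mg : Mm) (hmf : mf ∈ f.coeff.support) (hmg : mg ∈ g.coeff.support)
    (H1 : ∀ a ∈ f.coeff.support, a ≠ mf → ∀ b ∈ g.coeff.support, a + b ≠ mf + mg) :
    (f * g).coeff (mf + mg) = f.coeff mf * g.coeff mg := by
  classical
  rw [AddMonoidAlgebra.coeff_mul]
  rw [Finsupp.sum]
  rw [Finset.sum_eq_single_of_mem mf hmf]
  · rw [Finsupp.sum]
    rw [Finset.sum_eq_single_of_mem mg hmg]
    · rw [if_pos rfl]
    · intro b hb hbne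
      rw [if_neg]
      intro hc
      exact hbne (add_cancel_Mm hc)
  · intro a ha hane
    rw [Finsupp.sum]
    apply Finset.sum_eq_zero
    intro b hb
    rw [if_neg (H1 a ha hane b hb)]

lemma max_blocker (f g : RR) (mf mg : Mm)
    (hf : ∀ a ∈ f.coeff.support, LL a ≤ LL mf) (hg : ∀ b ∈ g.coeff.support, LL b ≤ LL mg) :
    ∀ a ∈ f.coeff.support, a ≠ mf → ∀ b ∈ g.coeff.support, a + b ≠ mf + mg := by
  intro a ha hane b hb hc
  have h1 : LL a < LL mf := lt_of_le_of_ne (hf a ha) (fun h => hane (LL_inj h))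
  have h2 : LL a + LL b < LL mf + LL mg := add_lt_add_of_lt_of_le h1 (hg b hb)
  rw [← LL_add, ← LL_add, hc] at h2
  exact lt_irrefl _ h2

lemma min_blocker (f g : RR) (mf mg : Mm)
    (hf : ∀ a ∈ f.coeff.support, LL mf ≤ LL a) (hg : ∀ b ∈ g.coeff.support, LL mg ≤ LL b) :
    ∀ a ∈ f.coeff.support, a ≠ mf → ∀ b ∈ g.coeff.support, a + b ≠ mf + mg := by
  intro a ha hane b hb hc
  have h1 : LL mf < LL a := lt_of_le_of_ne (hf a ha) (fun h => hane (LL_inj h).symm)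
  have h2 : LL mf + LL mg < LL a + LL b := add_lt_add_of_lt_of_le h1 (hg b hb)
  rw [← LL_add, ← LL_add, hc] at h2
  exact lt_irrefl _ h2

lemma zmod2_mul_eq_one : ∀ a b : ZMod 2, a * b = 1 → a = 1 ∧ b = 1 := by decide

/-- KEY: divisors of monomials are monomials -/
lemma mul_eq_single {f g : RR} {w : Mm} (h : f * g = AddMonoidAlgebra.single w 1) :
    ∃ wf wg : Mm, wf + wg = w ∧ f = AddMonoidAlgebra.single wf 1 ∧ g = AddMonoidAlgebra.single wg 1 := by
  classical
  have hne : (AddMonoidAlgebra.single w 1 : RR) ≠ 0 := by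
    intro h0
    have h1 := congrFun (congrArg (fun p : RR => (p.coeff : Mm → ZMod 2)) h0) w
    simp [AddMonoidAlgebra.coeff_single, Finsupp.single_eq_same] at h1
  have hf : f ≠ 0 := by rintro rfl; rw [zero_mul] at h; exact hne h.symm
  have hg : g ≠ 0 := by rintro rfl; rw [mul_zero] at h; exact hne h.symm
  obtain ⟨Mf, hMf, hMf2⟩ := f.coeff.support.exists_max_image LL (Finsupp.support_nonempty_iff.mpr (AddMonoidAlgebra.coeff_eq_zero.not.mpr hf))
  obtain ⟨Mg, hMg, hMg2⟩ := g.coeff.support.exists_max_image LL (Finsupp.support_nonempty_iff.mpr (AddMonoidAlgebra.coeff_eq_zero.not.mpr hg))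
  obtain ⟨mf, hmf, hmf2⟩ := f.coeff.support.exists_min_image LL (Finsupp.support_nonempty_iff.mpr (AddMonoidAlgebra.coeff_eq_zero.not.mpr hf))
  obtain ⟨mg, hmg, hmg2⟩ := g.coeff.support.exists_min_image LL (Finsupp.support_nonempty_iff.mpr (AddMonoidAlgebra.coeff_eq_zero.not.mpr hg))
  have hval : (f * g).coeff (Mf + Mg) = f.coeff Mf * g.coeff Mg :=
    coeff_extreme f g Mf Mg hMf hMg (max_blocker f g Mf Mg hMf2 hMg2)
  have cM : (f * g).coeff (Mf + Mg) ≠ 0 := by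
    rw [hval]
    exact mul_ne_zero (Finsupp.mem_support_iff.mp hMf) (Finsupp.mem_support_iff.mp hMg)
  have cm : (f * g).coeff (mf + mg) ≠ 0 := by
    rw [coeff_extreme f g mf mg hmf hmg (min_blocker f g mf mg hmf2 hmg2)]
    exact mul_ne_zero (Finsupp.mem_support_iff.mp hmf) (Finsupp.mem_support_iff.mp hmg)
  rw [h, AddMonoidAlgebra.coeff_single] at cM cm
  have eM : Mf + Mg = w := (Finsupp.single_apply_ne_zero.mp cM).1
  have em : mf + mg = w := (Finsupp.single_apply_ne_zero.mp cm).1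
  have heq : LL mf + LL mg = LL Mf + LL Mg := by
    rw [← LL_add, ← LL_add, eM, em]
  have hf1 : LL mf ≤ LL Mf := hMf2 mf hmf
  have hg1 : LL mg ≤ LL Mg := hMg2 mg hmg
  have hgeq : LL mg = LL Mg := by
    by_contra hne'
    exact absurd heq (ne_of_lt (add_lt_add_of_le_of_lt hf1 (lt_of_le_of_ne hg1 hne')))
  have hfeq : LL mf = LL Mf := by
    rw [hgeq] at heq
    exact add_right_cancel heq
  have hfs : f.coeff.support ⊆ {Mf} := by
    intro a ha
    have h1 : LL a ≤ LL Mf := hMf2 a ha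
    have h2 : LL Mf ≤ LL a := hfeq ▸ hmf2 a ha
    simp only [Finset.mem_singleton]
    exact LL_inj (le_antisymm h1 h2)
  have hgs : g.coeff.support ⊆ {Mg} := by
    intro a ha
    have h1 : LL a ≤ LL Mg := hMg2 a ha
    have h2 : LL Mg ≤ LL a := hgeq ▸ hmg2 a ha
    simp only [Finset.mem_singleton]
    exact LL_inj (le_antisymm h1 h2)
  have hfe : f = AddMonoidAlgebra.single Mf (f.coeff Mf) := AddMonoidAlgebra.coeff_injective (Finsupp.support_subset_singleton.mp hfs)
  have hge : g = AddMonoidAlgebra.single Mg (g.coeff Mg) := AddMonoidAlgebra.coeff_injective (Finsupp.support_subset_singleton.mp hgs)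
  have hco : f.coeff Mf * g.coeff Mg = 1 := by
    rw [← hval, h, eM, AddMonoidAlgebra.coeff_single, Finsupp.single_eq_same]
  obtain ⟨ha, hb⟩ := zmod2_mul_eq_one _ _ hco
  exact ⟨Mf, Mg, eM, by rw [hfe, ha], by rw [hge, hb]⟩

/-- the halving map on the monoid -/
def half (m : Mm) : Mm := ⟨fun i => (m : VV) i / 2, by
  have hm := m.2
  rw [mem_Mc] at hm ⊢
  obtain ⟨h0, h1, h2, h3, h4⟩ := hm
  refine ⟨by linarith, by linarith, by linarith, by linarith, by linarith⟩⟩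

lemma half_add_half (m : Mm) : half m + half m = m := by
  apply Subtype.ext
  funext i
  show (half m : VV) i + (half m : VV) i = (m : VV) i
  show (m : VV) i / 2 + (m : VV) i / 2 = (m : VV) i
  ring

lemma two_RR : (2 : RR) = 0 := by
  have h1 : (1 : RR) = AddMonoidAlgebra.single 0 1 := rfl
  rw [← one_add_one_eq_two, h1, ← AddMonoidAlgebra.single_add]
  have h2 : (1 + 1 : ZMod 2) = 0 := by decide
  rw [h2, AddMonoidAlgebra.single_zero]

lemma RR_add_sq (a b : RR) : (a + b) * (a + b) = a * a + b * b := by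
  calc (a + b) * (a + b) = a * a + b * b + 2 * (a * b) := by ring
  _ = a * a + b * b := by rw [two_RR]; ring

lemma zmod2_sq : ∀ c : ZMod 2, c * c = c := by decide

lemma exists_sq (f : RR) : ∃ g : RR, g * g = f := by
  induction f using AddMonoidAlgebra.induction with
  | zero => exact ⟨0, by simp⟩
  | single_add m c f hm hc ih =>
    obtain ⟨g, hg⟩ := ih
    refine ⟨AddMonoidAlgebra.single (half m) c + g, ?_⟩
    rw [RR_add_sq, hg]
    congr 1
    rw [AddMonoidAlgebra.single_mul_single, half_add_half, zmod2_sq]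

lemma no_irred (p : RR) : ¬ Irreducible p := by
  intro hp
  obtain ⟨g, hg⟩ := exists_sq p
  rcases hp.isUnit_or_isUnit hg.symm with h | h <;>
    exact hp.not_isUnit (hg ▸ h.mul h)

lemma unit_eq_one {u : RR} (hu : IsUnit u) : u = AddMonoidAlgebra.single 0 1 := by
  obtain ⟨v, hv⟩ := hu.exists_right_inv
  have h1 : u * v = AddMonoidAlgebra.single 0 1 := hv
  obtain ⟨wu, wv, hsum, hu1, hv1⟩ := mul_eq_single h1
  have hwu : wu = 0 := by
    have hc : (wu : VV) + (wv : VV) = 0 := congrArg Subtype.val hsum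
    have hu2 := wu.2; have hv2 := wv.2
    rw [mem_Mc] at hu2 hv2
    have hci0 : (wu : VV) 0 + (wv : VV) 0 = 0 := congrFun hc 0
    have hci1 : (wu : VV) 1 + (wv : VV) 1 = 0 := congrFun hc 1
    have hci2 : (wu : VV) 2 + (wv : VV) 2 = 0 := congrFun hc 2
    have hci3 : (wu : VV) 3 + (wv : VV) 3 = 0 := congrFun hc 3
    have e0 : (wu : VV) 0 = 0 := by linarith [hu2.1, hv2.1]
    have e1 : (wu : VV) 1 = 0 := by linarith [hu2.2.1, hv2.2.1]
    have e2 : (wu : VV) 2 = 0 := by linarith [hu2.2.2.1, hv2.2.2.1]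
    have e3 : (wu : VV) 3 = 0 := by linarith [hu2.2.2.2.1, hv2.2.2.2.1]
    apply Subtype.ext
    funext i
    show (wu : VV) i = 0
    fin_cases i
    exacts [e0, e1, e2, e3]
  rw [hu1, hwu]

/-- monomials -/
def XX (m : Mm) : RR := AddMonoidAlgebra.single m 1

lemma XX_ne_zero (m : Mm) : XX m ≠ 0 := by
  intro h0
  have h1 := congrFun (congrArg (fun p : RR => (p.coeff : Mm → ZMod 2)) h0) m
  simp [XX, AddMonoidAlgebra.coeff_single, Finsupp.single_eq_same] at h1

theorem RR_idf : IsIDFDomain RR := by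
  intro a _
  apply Set.Finite.subset Set.finite_empty
  rintro p ⟨hirr, -⟩
  obtain ⟨b, rfl⟩ := Associates.mk_surjective p
  exact absurd (Associates.irreducible_mk.mp hirr) (no_irred b)


noncomputable instance : DecidableEq RR := Classical.decEq _

def tq (n : ℕ) : ℚ := 1 / (n + 1)

lemma tq_pos (n : ℕ) : 0 < tq n := by unfold tq; positivity

lemma tq_le_one (n : ℕ) : tq n ≤ 1 := by
  unfold tq
  rw [div_le_one (by positivity)]
  have : (0:ℚ) ≤ (n:ℚ) := Nat.cast_nonneg n
  linarith

lemma tq_inj : Function.Injective tq := by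
  intro n m h
  unfold tq at h
  rw [div_eq_div_iff (by positivity) (by positivity)] at h
  have : (n : ℚ) = m := by linarith
  exact_mod_cast this

def xe : Mm := ⟨![1,1,0,1], by rw [mem_Mc]; simp⟩
def ye : Mm := ⟨![1,0,1,1], by rw [mem_Mc]; simp⟩
def x0 : Mm := ⟨![1,0,0,0], by rw [mem_Mc]; simp⟩

def dd (n : ℕ) : Mm := ⟨![1,0,0,tq n], by
  rw [mem_Mc]
  refine ⟨by norm_num, by norm_num, by simp, ?_, ?_⟩ <;> simp
  · exact (tq_pos n).le
  · linarith [tq_le_one n]⟩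

def dx (n : ℕ) : Mm := ⟨![0,1,0,1 - tq n], by
  rw [mem_Mc]
  refine ⟨by norm_num, by norm_num, by simp, ?_, ?_⟩ <;> simp
  · linarith [tq_le_one n]
  · linarith [tq_pos n]⟩

def dy (n : ℕ) : Mm := ⟨![0,0,1,1 - tq n], by
  rw [mem_Mc]
  refine ⟨by norm_num, by norm_num, by simp, ?_, ?_⟩ <;> simp
  · linarith [tq_le_one n]
  · linarith [tq_pos n]⟩

lemma dd_add_dx (n : ℕ) : dd n + dx n = xe := by
  apply Subtype.ext
  show (![1,0,0,tq n] : VV) + ![0,1,0,1 - tq n] = ![1,1,0,1]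
  funext i
  fin_cases i <;> simp [Pi.add_apply]

lemma dd_add_dy (n : ℕ) : dd n + dy n = ye := by
  apply Subtype.ext
  show (![1,0,0,tq n] : VV) + ![0,0,1,1 - tq n] = ![1,0,1,1]
  funext i
  fin_cases i <;> simp [Pi.add_apply]

lemma XX_mul (a b : Mm) : XX a * XX b = XX (a + b) := by
  unfold XX
  rw [AddMonoidAlgebra.single_mul_single, one_mul]

def SS : Finset RR := {XX xe, XX ye}

lemma mem_SS {s : RR} : s ∈ SS ↔ s = XX xe ∨ s = XX ye := by
  simp [SS]

lemma dd_isMCD (n : ℕ) : IsMCD (↑SS : Set RR) (XX (dd n)) := by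
  constructor
  · intro s hs
    rw [Finset.mem_coe, mem_SS] at hs
    rcases hs with rfl | rfl
    · exact ⟨XX (dx n), by rw [XX_mul, dd_add_dx]⟩
    · exact ⟨XX (dy n), by rw [XX_mul, dd_add_dy]⟩
  · intro e he
    obtain ⟨q1, hq1⟩ := he (XX xe) (by rw [Finset.mem_coe, mem_SS]; left; rfl)
    obtain ⟨q2, hq2⟩ := he (XX ye) (by rw [Finset.mem_coe, mem_SS]; right; rfl)
    have h1 : XX (dd n) * (e * q1) = AddMonoidAlgebra.single xe 1 := by
      rw [← mul_assoc, ← hq1]; rfl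
    have h2 : XX (dd n) * (e * q2) = AddMonoidAlgebra.single ye 1 := by
      rw [← mul_assoc, ← hq2]; rfl
    obtain ⟨w1, w2, hw12, hXd1, hEq1⟩ := mul_eq_single h1
    obtain ⟨w1', w2', hw12', hXd2, hEq2⟩ := mul_eq_single h2
    have hw1 : w1 = dd n := (AddMonoidAlgebra.single_left_injective one_ne_zero hXd1).symm
    have hw1' : w1' = dd n := (AddMonoidAlgebra.single_left_injective one_ne_zero hXd2).symm
    obtain ⟨we, wq, hweq, hE1, hQ1⟩ := mul_eq_single hEq1
    obtain ⟨we', wq', hweq', hE2, hQ2⟩ := mul_eq_single hEq2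
    have hwe' : we' = we :=
      AddMonoidAlgebra.single_left_injective (one_ne_zero (α := ZMod 2))
        (show (AddMonoidAlgebra.single we' (1 : ZMod 2) : RR) = AddMonoidAlgebra.single we 1 by
          rw [← hE1, ← hE2])
    -- monoid equations
    have hA : dd n + (we + wq) = xe := by rw [hweq, ← hw1, hw12]
    have hB : dd n + (we + wq') = ye := by rw [← hwe', hweq', ← hw1', hw12']
    -- coordinates
    have hAV : ∀ i : Fin 4, (![1,0,0,tq n] : VV) i + ((we : VV) i + (wq : VV) i)
        = (![1,1,0,1] : VV) i := fun i => congrFun (congrArg Subtype.val hA) i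
    have hBV : ∀ i : Fin 4, (![1,0,0,tq n] : VV) i + ((we : VV) i + (wq' : VV) i)
        = (![1,0,1,1] : VV) i := fun i => congrFun (congrArg Subtype.val hB) i
    have hwe2 := we.2; have hwq2 := wq.2; have hwq'2 := wq'.2
    rw [mem_Mc] at hwe2 hwq2 hwq'2
    have hA0 := hAV 0; have hA2 := hAV 2; have hB1 := hBV 1
    simp at hA0 hA2 hB1
    have e0 : (we : VV) 0 = 0 := by linarith [hwe2.1, hwq2.1]
    have e1 : (we : VV) 1 = 0 := by linarith [hwe2.2.1, hwq'2.2.1]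
    have e2 : (we : VV) 2 = 0 := by linarith [hwe2.2.2.1, hwq2.2.2.1]
    have e3 : (we : VV) 3 = 0 := by linarith [hwe2.2.2.2.1, hwe2.2.2.2.2]
    have hwe0 : we = 0 := by
      apply Subtype.ext
      funext i
      show (we : VV) i = 0
      fin_cases i
      exacts [e0, e1, e2, e3]
    rw [hE1, hwe0]
    have h1eq : AddMonoidAlgebra.single (0 : Mm) (1 : ZMod 2) = (1 : RR) := rfl
    rw [h1eq]
    exact isUnit_one

theorem RR_not_bfd : ¬ IsBFD RR := by
  intro h
  obtain ⟨hne, -⟩ := h (XX x0) (XX_ne_zero x0)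
  obtain ⟨n, s, hs, -⟩ := hne
  rcases Multiset.empty_or_exists_mem s with rfl | ⟨p, hp⟩
  · have h1 : Associates.mk (XX x0) = 1 := by
      have := hs.2
      rw [Multiset.prod_zero] at this
      exact this.symm
    have h2 : IsUnit (XX x0) := Associates.mk_eq_one.mp h1
    have h3 := unit_eq_one h2
    have h4 : x0 = 0 := AddMonoidAlgebra.single_left_injective one_ne_zero h3
    have h5 : (![1,0,0,0] : VV) 0 = (0 : VV) 0 := congrFun (congrArg Subtype.val h4) 0
    norm_num at h5
  · obtain ⟨b, hb⟩ := Associates.mk_surjective p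
    exact no_irred b (Associates.irreducible_mk.mp (hb ▸ hs.1 p hp))

theorem RR_not_mcd : ¬ IsMCDFiniteDomain RR := by
  intro h
  have hfin := h SS ⟨XX xe, by rw [mem_SS]; left; rfl⟩
    (by intro s hs; rw [mem_SS] at hs; rcases hs with rfl | rfl <;> exact XX_ne_zero _)
  have hinf : (Associates.mk '' {d : RR | IsMCD (↑SS : Set RR) d}).Infinite := by
    apply Set.infinite_of_injective_forall_mem
      (f := fun n : ℕ => Associates.mk (XX (dd n)))
    · intro n m hnm
      simp only at hnm
      rw [Associates.mk_eq_mk_iff_associated] at hnm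
      obtain ⟨u, hu⟩ := hnm
      have hu1 : (u : RR) = AddMonoidAlgebra.single 0 1 := unit_eq_one u.isUnit
      rw [hu1] at hu
      have hX : XX (dd n) = XX (dd m) := by
        rw [← hu]
        unfold XX
        rw [AddMonoidAlgebra.single_mul_single, add_zero, mul_one]
      have hd : dd n = dd m := AddMonoidAlgebra.single_left_injective one_ne_zero hX
      have ht : tq n = tq m := by
        have h3 : (![1,0,0,tq n] : VV) 3 = (![1,0,0,tq m] : VV) 3 :=
          congrFun (congrArg Subtype.val hd) 3
        norm_num at h3
        exact h3
      exact tq_inj ht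
    · intro n
      exact ⟨XX (dd n), dd_isMCD n, rfl⟩
  exact hinf hfin

/-- There exists an integral domain that is an IDF domain but is neither a
bounded factorization domain nor an MCD-finite domain. -/
theorem exists_idf_domain_not_bfd_not_mcd_finite :
    ∃ (R : Type) (_ : CommRing R) (_ : IsDomain R),
      IsIDFDomain R ∧ ¬ IsBFD R ∧ ¬ IsMCDFiniteDomain R := by
  exact ⟨RR, inferInstance, NoZeroDivisors.to_isDomain _, RR_idf, RR_not_bfd, RR_not_mcd⟩

end
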